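/- Let F(x) = ∏_{i=1}^k χ_{[0,∞)}(x_i)·x_i^{d_i−1} on ℝⁿ with each d_i ≥ 2, and let |d| = d_1 + ⋯ + d_k + (n−k). Then F is locally Lipschitz with the quantitative bound: there exists C > 0 such that for all x, z ∈ ℝⁿ with |x − z| ≤ 1, |F(x) − F(z)| ≤ C·(1 + |x|^{|d|−n−1})·|x − z|. -/
import Mathlib



-- coordinate bound
lemma coord_abs_le_norm {n : ℕ} (x : EuclideanSpace ℝ (Fin n)) (i : Fin n) :
    |x i| ≤ ‖x‖ := by
  rw [EuclideanSpace.norm_eq, ← Real.sqrt_sq_eq_abs]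
  apply Real.sqrt_le_sqrt
  simp only [Real.norm_eq_abs, sq_abs]
  exact Finset.single_le_sum (f := fun j => (x j)^2) (fun j _ => sq_nonneg _) (Finset.mem_univ i)

-- one-variable pow Lipschitz
lemma pow_sub_pow_abs_le {a b M : ℝ} (m : ℕ) (ha : |a| ≤ M) (hb : |b| ≤ M) :
    |a ^ m - b ^ m| ≤ m * M ^ (m - 1) * |a - b| := by
  have hM : 0 ≤ M := le_trans (abs_nonneg a) ha
  rw [← geom_sum₂_mul, abs_mul]
  gcongr
  calc |∑ i ∈ Finset.range m, a ^ i * b ^ (m - 1 - i)|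
      ≤ ∑ i ∈ Finset.range m, |a ^ i * b ^ (m - 1 - i)| := Finset.abs_sum_le_sum_abs _ _
    _ ≤ ∑ i ∈ Finset.range m, M ^ (m - 1) := by
        apply Finset.sum_le_sum
        intro i hi
        rw [abs_mul, abs_pow, abs_pow]
        calc |a| ^ i * |b| ^ (m - 1 - i) ≤ M ^ i * M ^ (m - 1 - i) := by
              gcongr
          _ = M ^ (i + (m - 1 - i)) := (pow_add M i _).symm
          _ = M ^ (m - 1) := by
              congr 1
              have := Finset.mem_range.mp hi
              omega
    _ = m * M ^ (m - 1) := by rw [Finset.sum_const, Finset.card_range, nsmul_eq_mul]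

-- product difference bound
lemma prod_sub_prod_abs_le {ι : Type*} [DecidableEq ι] (s : Finset ι) (f g B ε : ι → ℝ)
    (hf : ∀ i ∈ s, |f i| ≤ B i) (hg : ∀ i ∈ s, |g i| ≤ B i)
    (hfg : ∀ i ∈ s, |f i - g i| ≤ ε i) :
    |∏ i ∈ s, f i - ∏ i ∈ s, g i| ≤ ∑ i ∈ s, ε i * ∏ j ∈ s.erase i, B j := by
  induction s using Finset.cons_induction with
  | empty => simp
  | cons a t hat ih =>
    have hBnn : ∀ i ∈ t, 0 ≤ B i := fun i hi =>
      le_trans (abs_nonneg _) (hf i (Finset.mem_cons_of_mem hi))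
    have hBa : 0 ≤ B a := le_trans (abs_nonneg _) (hf a (Finset.mem_cons_self a t))
    rw [Finset.prod_cons, Finset.prod_cons, Finset.sum_cons]
    have key : f a * ∏ i ∈ t, f i - g a * ∏ i ∈ t, g i
        = f a * (∏ i ∈ t, f i - ∏ i ∈ t, g i) + (f a - g a) * ∏ i ∈ t, g i := by ring
    rw [key]
    have habs : |∏ i ∈ t, g i| ≤ ∏ j ∈ t, B j := by
      rw [Finset.abs_prod]
      exact Finset.prod_le_prod (fun i _ => abs_nonneg _)
        (fun i hi => hg i (Finset.mem_cons_of_mem hi))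
    have ih' := ih (fun i hi => hf i (Finset.mem_cons_of_mem hi))
      (fun i hi => hg i (Finset.mem_cons_of_mem hi))
      (fun i hi => hfg i (Finset.mem_cons_of_mem hi))
    calc |f a * (∏ i ∈ t, f i - ∏ i ∈ t, g i) + (f a - g a) * ∏ i ∈ t, g i|
        ≤ |f a| * |∏ i ∈ t, f i - ∏ i ∈ t, g i| + |f a - g a| * |∏ i ∈ t, g i| := by
          rw [← abs_mul, ← abs_mul]; exact abs_add_le _ _
      _ ≤ B a * (∑ i ∈ t, ε i * ∏ j ∈ t.erase i, B j) + ε a * ∏ j ∈ t, B j := by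
          apply add_le_add
          · exact mul_le_mul (hf a (Finset.mem_cons_self a t)) ih' (abs_nonneg _) hBa
          · exact mul_le_mul (hfg a (Finset.mem_cons_self a t)) habs (abs_nonneg _)
              (le_trans (abs_nonneg _) (hfg a (Finset.mem_cons_self a t)))
      _ = ε a * ∏ j ∈ (Finset.cons a t hat).erase a, B j
          + ∑ i ∈ t, ε i * ∏ j ∈ (Finset.cons a t hat).erase i, B j := by
          rw [Finset.erase_cons]
          rw [Finset.mul_sum, add_comm]
          congr 1
          apply Finset.sum_congr rfl
          intro i hi
          have hai : a ≠ i := fun h => hat (h ▸ hi)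
          rw [Finset.erase_cons_of_ne hat hai, Finset.prod_cons]
          ring

lemma one_add_pow_le_two_pow {a : ℝ} (ha : 0 ≤ a) (p : ℕ) :
    (1 + a) ^ p ≤ 2 ^ p * (1 + a ^ p) := by
  have h1 : 1 + a ≤ 2 * max 1 a := by
    rcases max_cases 1 a with ⟨h, h'⟩ | ⟨h, h'⟩ <;> rw [h] <;> linarith
  calc (1 + a) ^ p ≤ (2 * max 1 a) ^ p :=
        pow_le_pow_left₀ (by linarith) h1 p
    _ = 2 ^ p * (max 1 a) ^ p := mul_pow _ _ _
    _ ≤ 2 ^ p * (1 + a ^ p) := by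
        have : (max 1 a) ^ p ≤ 1 + a ^ p := by
          rcases max_cases 1 a with ⟨h, h'⟩ | ⟨h, h'⟩ <;> rw [h]
          · simp; positivity
          · nlinarith [pow_nonneg ha p]
        nlinarith [pow_pos (by norm_num : (0:ℝ) < 2) p]


/-- The weight `F(x) = ∏_{i<k} χ_{[0,∞)}(x_i)·x_i^{d_i−1}` on `ℝⁿ` (with `d_i ≥ 2` for
`i < k` and `d_i = 1` otherwise, `|d| = Σ d_i`) satisfies the quantitative local Lipschitz
bound `|F(x) − F(z)| ≤ C(1 + |x|^{|d|−n−1})|x−z|` whenever `|x−z| ≤ 1`. -/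
theorem weight_locally_lipschitz (n k : ℕ) (hk : k ≤ n) (d : Fin n → ℕ)
    (hd2 : ∀ i : Fin n, (i : ℕ) < k → 2 ≤ d i)
    (hd1 : ∀ i : Fin n, k ≤ (i : ℕ) → d i = 1) :
    ∃ C > 0, ∀ x z : EuclideanSpace ℝ (Fin n), ‖x - z‖ ≤ 1 →
      |(∏ i ∈ Finset.univ.filter (fun i : Fin n => (i : ℕ) < k),
          if 0 ≤ x i then x i ^ (d i - 1) else 0) -
        (∏ i ∈ Finset.univ.filter (fun i : Fin n => (i : ℕ) < k),
          if 0 ≤ z i then z i ^ (d i - 1) else 0)|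
        ≤ C * (1 + ‖x‖ ^ ((∑ i, d i) - n - 1)) * ‖x - z‖ := by
  classical
  set s := Finset.univ.filter (fun i : Fin n => (i : ℕ) < k) with hs
  set m : Fin n → ℕ := fun i => d i - 1 with hm
  set S : ℕ := ∑ i ∈ s, m i with hS
  -- exponent identity
  have hd1' : ∀ i : Fin n, 1 ≤ d i := by
    intro i
    by_cases h : (i : ℕ) < k
    · exact le_trans one_le_two (hd2 i h)
    · exact le_of_eq (hd1 i (le_of_not_gt h)).symm
  have hsum_univ : ∑ i ∈ s, m i = ∑ i : Fin n, m i := by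
    apply Finset.sum_subset (Finset.filter_subset _ _)
    intro i _ hi
    simp only [hs, Finset.mem_filter, Finset.mem_univ, true_and, not_lt] at hi
    simp [hm, hd1 i hi]
  have hsum : ∑ i, d i = S + n := by
    have : ∑ i : Fin n, d i = ∑ i : Fin n, (m i + 1) := by
      apply Finset.sum_congr rfl
      intro i _
      have := hd1' i
      simp only [hm]
      omega
    rw [this, Finset.sum_add_distrib, Finset.sum_const, Finset.card_univ,
      Fintype.card_fin, smul_eq_mul, mul_one, hS, hsum_univ]
  have hexp : (∑ i, d i) - n - 1 = S - 1 := by omega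
  refine ⟨(S + 1) * 2 ^ S, by positivity, ?_⟩
  intro x z hxz
  set δ := ‖x - z‖ with hδ
  have hδ0 : 0 ≤ δ := norm_nonneg _
  set M : ℝ := ‖x‖ + 1 with hM
  have hM1 : 1 ≤ M := by have := norm_nonneg x; simp only [hM]; linarith
  have hM0 : 0 ≤ M := le_trans zero_le_one hM1
  have hzM : ‖z‖ ≤ M := by
    have : ‖z‖ ≤ ‖x‖ + ‖x - z‖ := by
      calc ‖z‖ = ‖x - (x - z)‖ := by congr 1; abel
        _ ≤ ‖x‖ + ‖x - z‖ := norm_sub_le _ _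
    linarith
  have hxM : ‖x‖ ≤ M := by simp only [hM]; linarith
  -- the coordinate functions
  set f : Fin n → ℝ := fun i => if 0 ≤ x i then x i ^ (d i - 1) else 0 with hf
  set g : Fin n → ℝ := fun i => if 0 ≤ z i then z i ^ (d i - 1) else 0 with hg
  have hmax : ∀ (a : ℝ) (p : ℕ), 1 ≤ p →
      (if 0 ≤ a then a ^ p else 0) = (max a 0) ^ p := by
    intro a p hp
    by_cases h : 0 ≤ a
    · rw [if_pos h, max_eq_left h]
    · rw [if_neg h, max_eq_right (le_of_not_ge h), zero_pow (by omega)]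
  have hmem : ∀ i ∈ s, 1 ≤ m i := by
    intro i hi
    simp only [hs, Finset.mem_filter, Finset.mem_univ, true_and] at hi
    have := hd2 i hi
    simp only [hm]
    omega
  have hfB : ∀ i ∈ s, |f i| ≤ M ^ m i := by
    intro i hi
    simp only [hf]
    rw [hmax _ _ (hmem i hi), abs_pow]
    apply pow_le_pow_left₀ (abs_nonneg _)
    calc |max (x i) 0| ≤ |x i| := by
          rcases le_total (x i) 0 with h | h
          · simp [max_eq_right h]
          · simp [max_eq_left h]
      _ ≤ ‖x‖ := coord_abs_le_norm x i
      _ ≤ M := hxM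
  have hgB : ∀ i ∈ s, |g i| ≤ M ^ m i := by
    intro i hi
    simp only [hg]
    rw [hmax _ _ (hmem i hi), abs_pow]
    apply pow_le_pow_left₀ (abs_nonneg _)
    calc |max (z i) 0| ≤ |z i| := by
          rcases le_total (z i) 0 with h | h
          · simp [max_eq_right h]
          · simp [max_eq_left h]
      _ ≤ ‖z‖ := coord_abs_le_norm z i
      _ ≤ M := hzM
  have hcoord : ∀ i : Fin n, |x i - z i| ≤ δ := by
    intro i
    have : (x - z) i = x i - z i := rfl
    calc |x i - z i| = |(x - z) i| := by rw [this]
      _ ≤ ‖x - z‖ := coord_abs_le_norm (x - z) i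
  have hfg : ∀ i ∈ s, |f i - g i| ≤ (m i) * M ^ (m i - 1) * δ := by
    intro i hi
    simp only [hf, hg]
    rw [hmax _ _ (hmem i hi), hmax _ _ (hmem i hi)]
    have haM : |max (x i) 0| ≤ M := by
      calc |max (x i) 0| ≤ |x i| := by
            rcases le_total (x i) 0 with h | h
            · simp [max_eq_right h]
            · simp [max_eq_left h]
        _ ≤ M := le_trans (coord_abs_le_norm x i) hxM
    have hbM : |max (z i) 0| ≤ M := by
      calc |max (z i) 0| ≤ |z i| := by
            rcases le_total (z i) 0 with h | h
            · simp [max_eq_right h]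
            · simp [max_eq_left h]
        _ ≤ M := le_trans (coord_abs_le_norm z i) hzM
    calc |(max (x i) 0) ^ m i - (max (z i) 0) ^ m i|
        ≤ (m i) * M ^ (m i - 1) * |max (x i) 0 - max (z i) 0| :=
          pow_sub_pow_abs_le (m i) haM hbM
      _ ≤ (m i) * M ^ (m i - 1) * δ := by
          apply mul_le_mul_of_nonneg_left _ (by positivity)
          exact le_trans (abs_max_sub_max_le_abs _ _ _) (hcoord i)
  -- main estimate
  have key := prod_sub_prod_abs_le s f g (fun i => M ^ m i)
    (fun i => (m i) * M ^ (m i - 1) * δ) hfB hgB hfg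
  have hterm : ∀ i ∈ s,
      (m i) * M ^ (m i - 1) * δ * ∏ j ∈ s.erase i, M ^ m j
        = (m i) * (M ^ (S - 1) * δ) := by
    intro i hi
    have h1 : m i + ∑ j ∈ s.erase i, m j = S := by
      rw [hS, Finset.add_sum_erase _ _ hi]
    have h2 : 1 ≤ m i := hmem i hi
    have h3 : M ^ (m i - 1) * M ^ (∑ j ∈ s.erase i, m j) = M ^ (S - 1) := by
      rw [← pow_add]
      congr 1
      omega
    calc (m i) * M ^ (m i - 1) * δ * ∏ j ∈ s.erase i, M ^ m j
        = (m i) * (M ^ (m i - 1) * M ^ (∑ j ∈ s.erase i, m j)) * δ := by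
          rw [Finset.prod_pow_eq_pow_sum]; ring
      _ = (m i) * (M ^ (S - 1) * δ) := by rw [h3]; ring
  have key2 : |(∏ i ∈ s, f i) - ∏ i ∈ s, g i| ≤ S * (M ^ (S - 1) * δ) := by
    refine le_trans key ?_
    rw [Finset.sum_congr rfl hterm, ← Finset.sum_mul]
    rw [← Nat.cast_sum, ← hS]
  refine le_trans key2 ?_
  rw [hexp]
  have h2pow : M ^ (S - 1) ≤ 2 ^ (S - 1) * (1 + ‖x‖ ^ (S - 1)) :=
    one_add_pow_le_two_pow (norm_nonneg x) (S - 1) |>.trans_eq' (by rw [hM, add_comm])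
  calc (S : ℝ) * (M ^ (S - 1) * δ)
      ≤ (S : ℝ) * (2 ^ (S - 1) * (1 + ‖x‖ ^ (S - 1)) * δ) := by
        apply mul_le_mul_of_nonneg_left _ (Nat.cast_nonneg S)
        exact mul_le_mul_of_nonneg_right h2pow hδ0
    _ ≤ (S + 1) * 2 ^ S * (1 + ‖x‖ ^ (S - 1)) * δ := by
        have e1 : (S : ℝ) ≤ S + 1 := by linarith
        have e2 : (2 : ℝ) ^ (S - 1) ≤ 2 ^ S :=
          pow_le_pow_right₀ one_le_two (Nat.sub_le S 1)
        have e3 : (0:ℝ) ≤ 1 + ‖x‖ ^ (S - 1) := by positivity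
        have e4 : (0:ℝ) ≤ (S : ℝ) := Nat.cast_nonneg S
        have hEδ : (0:ℝ) ≤ (1 + ‖x‖ ^ (S - 1)) * δ := by positivity
        have h5 : (S : ℝ) * 2 ^ (S - 1) ≤ ((S : ℝ) + 1) * 2 ^ S :=
          mul_le_mul e1 e2 (by positivity) (by positivity)
        nlinarith [mul_le_mul_of_nonneg_right h5 hEδ]
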